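/- Suppose the quaternion algebra ℍ[K,a,π] with a ∈ O_K^× is a division ring (equivalently, the quadratic form ⟨1,-a,-π,aπ⟩ is anisotropic over K). Then the residue ā ∈ k of a is not a square in the residue field k; consequently k(√ā) is a quadratic field extension of k. -/

import Mathlib

noncomputable section

/-- A surjective discrete valuation `ν : K → ℤ` on a field `K`
(the value of `ν` at `0` is irrelevant: only nonzero elements are constrained). -/
structure DVal (K : Type) [Field K] : Type where
  ν : K → ℤ
  ν_mul : ∀ x y : K, x ≠ 0 → y ≠ 0 → ν (x * y) = ν x + ν y
  ν_add : ∀ x y : K, x ≠ 0 → y ≠ 0 → x + y ≠ 0 → min (ν x) (ν y) ≤ ν (x + y)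
  ν_one : ν 1 = 0
  ν_surj : ∀ n : ℤ, ∃ x : K, x ≠ 0 ∧ ν x = n

namespace DVal

variable {K : Type} [Field K]

/-- `x` belongs to the valuation ring `O_K`. -/
def Int (V : DVal K) (x : K) : Prop := x = 0 ∨ 0 ≤ V.ν x

/-- `x` is a unit of the valuation ring `O_K`. -/
def IntUnit (V : DVal K) (x : K) : Prop := x ≠ 0 ∧ V.ν x = 0

/-- `x` belongs to the maximal ideal `m_K` of the valuation ring `O_K`. -/
def MaxIdeal (V : DVal K) (x : K) : Prop := x = 0 ∨ 1 ≤ V.ν x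

/-- `K` is complete with respect to the valuation `ν`: every Cauchy sequence converges. -/
def IsComplete (V : DVal K) : Prop :=
  ∀ f : ℕ → K,
    (∀ M : ℤ, ∃ N : ℕ, ∀ m n : ℕ, N ≤ m → N ≤ n →
      f m - f n = 0 ∨ M ≤ V.ν (f m - f n)) →
    ∃ L : K, ∀ M : ℤ, ∃ N : ℕ, ∀ n : ℕ, N ≤ n →
      f n - L = 0 ∨ M ≤ V.ν (f n - L)

/-- The residue field `k = O_K/m_K` has characteristic different from `2`,
i.e. `2` is a unit of the valuation ring `O_K`. -/
def ResCharNeTwo (V : DVal K) : Prop := (2 : K) ≠ 0 ∧ V.ν 2 = 0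

end DVal

/-- The reduced norm of a quaternion `u = δ + αx + βy + γz ∈ ℍ[K,a,b]`:
`Nrd u = u·τ(u) = δ² - aα² - bβ² + abγ²`. -/
def qnrd {K : Type} [Field K] (a b : K) (u : QuaternionAlgebra K a 0 b) : K :=
  u.re ^ 2 - a * u.imI ^ 2 - b * u.imJ ^ 2 + a * b * u.imK ^ 2

/-- The canonical involution `τ(δ + αx + βy + γz) = δ - αx - βy - γz` of `ℍ[K,a,b]`. -/
def qtau {K : Type} [Field K] {a b : K} (u : QuaternionAlgebra K a 0 b) :
    QuaternionAlgebra K a 0 b :=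
  ⟨u.re, -u.imI, -u.imJ, -u.imK⟩

/-- The norm form `⟨1,-a,-b,ab⟩` of `ℍ[K,a,b]` is anisotropic over `K`
(equivalently, `ℍ[K,a,b]` is a division ring). -/
def QAniso {K : Type} [Field K] (a b : K) : Prop :=
  ∀ d e f g : K, d ^ 2 - a * e ^ 2 - b * f ^ 2 + a * b * g ^ 2 = 0 →
    d = 0 ∧ e = 0 ∧ f = 0 ∧ g = 0

/-- The valuation `ν_D(u) = (1/2)·ν_K(Nrd u)` of the quaternion division algebra
`D = ℍ[K,a,b]` (at nonzero `u`). -/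
def qnu {K : Type} [Field K] (V : DVal K) (a b : K) (u : QuaternionAlgebra K a 0 b) : ℚ :=
  (V.ν (qnrd a b u) : ℚ) / 2

namespace DVal

variable {K : Type} [Field K] (V : DVal K)

lemma nu_neg_one : V.ν (-1 : K) = 0 := by
  have h := V.ν_mul (-1) (-1) (by norm_num) (by norm_num)
  have h1 : ((-1 : K)) * (-1) = 1 := by ring
  rw [h1, V.ν_one] at h
  omega

lemma nu_neg (x : K) (hx : x ≠ 0) : V.ν (-x) = V.ν x := by
  have h := V.ν_mul (-1) x (by norm_num) hx
  rw [neg_one_mul] at h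
  rw [h, V.nu_neg_one]; ring

lemma nu_sq (x : K) (hx : x ≠ 0) : V.ν (x ^ 2) = 2 * V.ν x := by
  rw [pow_two, V.ν_mul x x hx hx]; ring

lemma nu_inv (x : K) (hx : x ≠ 0) : V.ν x⁻¹ = - V.ν x := by
  have h := V.ν_mul x x⁻¹ hx (inv_ne_zero hx)
  rw [mul_inv_cancel₀ hx, V.ν_one] at h
  omega

lemma nu_div (x y : K) (hx : x ≠ 0) (hy : y ≠ 0) : V.ν (x / y) = V.ν x - V.ν y := by
  rw [div_eq_mul_inv, V.ν_mul x y⁻¹ hx (inv_ne_zero hy), V.nu_inv y hy]; ring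

lemma nu_add_eq (x y : K) (hx : x ≠ 0) (hy : y ≠ 0) (hlt : V.ν x < V.ν y) :
    x + y ≠ 0 ∧ V.ν (x + y) = V.ν x := by
  have hne : x + y ≠ 0 := by
    intro h
    have hxy : x = -y := by linear_combination h
    rw [hxy, V.nu_neg y hy] at hlt
    omega
  refine ⟨hne, ?_⟩
  have h1 := V.ν_add x y hx hy hne
  have h2 := V.ν_add (x + y) (-y) hne (neg_ne_zero.mpr hy) (by
    intro h; exact hx (by linear_combination h))
  have h3 : (x + y) + -y = x := by ring
  rw [h3, V.nu_neg y hy] at h2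
  omega

end DVal

/-- Newton iteration for approximating `√a` starting at `c`. -/
def newtonSeq {K : Type} [Field K] (a c : K) : ℕ → K
  | 0 => c
  | n + 1 => (newtonSeq a c n + a / newtonSeq a c n) / 2

/-- if `ℍ[K,a,ϖ]` is a division ring (with `a ∈ O_K^×`, `ϖ` a uniformizer) then
the residue of `a` is not a square in the residue field `k`: no square of an element of `O_K`
is congruent to `a` modulo `m_K`. -/
theorem stmt_11 (K : Type) [Field K] (V : DVal K)
    -- K is complete with residue field of characteristic ≠ 2
    (hcomp : V.IsComplete) (hchar : V.ResCharNeTwo)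
    -- D = ℍ[K,a,ϖ] with a ∈ O_K^×, ϖ a uniformizer, D a division ring
    (a ϖ : K) (ha0 : a ≠ 0) (hva : V.ν a = 0) (hϖ0 : ϖ ≠ 0) (hvϖ : V.ν ϖ = 1)
    (haniso : QAniso a ϖ)
 :
    ∀ c : K, V.Int c → ¬ V.MaxIdeal (a - c ^ 2) := by
  intro c _ hmax
  have h2 : (2 : K) ≠ 0 := hchar.1
  -- no square root of `a` in `K`
  have main : ∀ L : K, L ^ 2 = a → False := by
    intro L hL
    have h := haniso L 1 0 0 (by rw [hL]; ring)
    exact one_ne_zero h.2.1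
  by_cases hm0 : a - c ^ 2 = 0
  · exact main c (by linear_combination -hm0)
  have hm : 1 ≤ V.ν (a - c ^ 2) := by
    rcases hmax with h | h
    · exact absurd h hm0
    · exact h
  have hνm' : V.ν (-(a - c ^ 2)) = V.ν (a - c ^ 2) := V.nu_neg _ hm0
  have h1 := V.nu_add_eq a (-(a - c ^ 2)) ha0 (neg_ne_zero.mpr hm0) (by rw [hνm']; omega)
  have hc2 : c ^ 2 = a + -(a - c ^ 2) := by ring
  have hcne : c ≠ 0 := by
    intro h
    apply h1.1
    rw [← hc2, h]; ring
  have hνc : V.ν c = 0 := by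
    have hs := V.nu_sq c hcne
    rw [hc2, h1.2, hva] at hs
    omega
  -- if Newton ever hits an exact root, done
  by_cases hroot : ∃ n, (newtonSeq a c n) ^ 2 = a
  · obtain ⟨n, hn⟩ := hroot
    exact main _ hn
  push_neg at hroot
  -- invariant
  have inv : ∀ n : ℕ, newtonSeq a c n ≠ 0 ∧ V.ν (newtonSeq a c n) = 0 ∧
      (n : ℤ) + 1 ≤ V.ν ((newtonSeq a c n) ^ 2 - a) := by
    intro n
    induction n with
    | zero =>
      refine ⟨hcne, hνc, ?_⟩
      have he : newtonSeq a c 0 ^ 2 - a = -(a - c ^ 2) := by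
        show c ^ 2 - a = _; ring
      rw [he, hνm']
      simpa using hm
    | succ n ih =>
      obtain ⟨hne, hν0, hνd⟩ := ih
      have hd : newtonSeq a c n ^ 2 - a ≠ 0 := sub_ne_zero.mpr (hroot n)
      have h2f : (2 : K) * newtonSeq a c n ≠ 0 := mul_ne_zero h2 hne
      have htne : (newtonSeq a c n ^ 2 - a) / (2 * newtonSeq a c n) ≠ 0 :=
        div_ne_zero hd h2f
      have hkey : newtonSeq a c (n + 1) ^ 2 - a =
          ((newtonSeq a c n ^ 2 - a) / (2 * newtonSeq a c n)) ^ 2 := by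
        show ((newtonSeq a c n + a / newtonSeq a c n) / 2) ^ 2 - a = _
        field_simp
        ring
      have hνt : V.ν ((newtonSeq a c n ^ 2 - a) / (2 * newtonSeq a c n)) =
          V.ν (newtonSeq a c n ^ 2 - a) := by
        rw [V.nu_div _ _ hd h2f, V.ν_mul 2 _ h2 hne, hchar.2, hν0]; ring
      have hν2 : V.ν (newtonSeq a c (n + 1) ^ 2 - a) =
          2 * V.ν (newtonSeq a c n ^ 2 - a) := by
        rw [hkey, V.nu_sq _ htne, hνt]
      have hbig : (n : ℤ) + 2 ≤ V.ν (newtonSeq a c (n + 1) ^ 2 - a) := by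
        rw [hν2]; omega
      have hd1 : newtonSeq a c (n + 1) ^ 2 - a ≠ 0 := sub_ne_zero.mpr (hroot (n + 1))
      have hadd := V.nu_add_eq a (newtonSeq a c (n + 1) ^ 2 - a) ha0 hd1
        (by rw [hva]; omega)
      have heq : a + (newtonSeq a c (n + 1) ^ 2 - a) = newtonSeq a c (n + 1) ^ 2 := by ring
      rw [heq] at hadd
      have hfne : newtonSeq a c (n + 1) ≠ 0 := by
        intro h
        apply hadd.1
        rw [h]; ring
      have hνf : V.ν (newtonSeq a c (n + 1)) = 0 := by
        have hs := V.nu_sq _ hfne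
        rw [hadd.2, hva] at hs
        omega
      refine ⟨hfne, hνf, by push_cast; omega⟩
  -- consecutive differences
  have hstepν : ∀ n : ℕ, newtonSeq a c (n + 1) - newtonSeq a c n ≠ 0 ∧
      (n : ℤ) + 1 ≤ V.ν (newtonSeq a c (n + 1) - newtonSeq a c n) := by
    intro n
    obtain ⟨hne, hν0, hνd⟩ := inv n
    have hd : newtonSeq a c n ^ 2 - a ≠ 0 := sub_ne_zero.mpr (hroot n)
    have h2f : (2 : K) * newtonSeq a c n ≠ 0 := mul_ne_zero h2 hne
    have hstep : newtonSeq a c (n + 1) - newtonSeq a c n =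
        (-(newtonSeq a c n ^ 2 - a)) / (2 * newtonSeq a c n) := by
      show (newtonSeq a c n + a / newtonSeq a c n) / 2 - newtonSeq a c n = _
      field_simp
      ring
    rw [hstep]
    refine ⟨div_ne_zero (neg_ne_zero.mpr hd) h2f, ?_⟩
    rw [V.nu_div _ _ (neg_ne_zero.mpr hd) h2f, V.nu_neg _ hd,
      V.ν_mul 2 _ h2 hne, hchar.2, hν0]
    omega
  -- differences at distance k
  have hdiff : ∀ n k : ℕ, newtonSeq a c (n + k) - newtonSeq a c n = 0 ∨
      (newtonSeq a c (n + k) - newtonSeq a c n ≠ 0 ∧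
        (n : ℤ) + 1 ≤ V.ν (newtonSeq a c (n + k) - newtonSeq a c n)) := by
    intro n k
    induction k with
    | zero => left; simp
    | succ k ih =>
      have hs := hstepν (n + k)
      have heq : newtonSeq a c (n + (k + 1)) - newtonSeq a c n =
          (newtonSeq a c (n + k + 1) - newtonSeq a c (n + k)) +
            (newtonSeq a c (n + k) - newtonSeq a c n) := by
        have : n + (k + 1) = n + k + 1 := by omega
        rw [this]; ring
      rcases ih with h0 | ⟨hne2, hb2⟩
      · rw [heq, h0, add_zero]
        right
        refine ⟨hs.1, ?_⟩
        have := hs.2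
        push_cast at this ⊢
        omega
      · by_cases hz : newtonSeq a c (n + (k + 1)) - newtonSeq a c n = 0
        · left; exact hz
        · right
          refine ⟨hz, ?_⟩
          rw [heq] at hz ⊢
          have hmin := V.ν_add _ _ hs.1 hne2 hz
          have := hs.2
          push_cast at this
          omega
  -- Cauchy
  have hcauchy : ∀ M : ℤ, ∃ N : ℕ, ∀ m n : ℕ, N ≤ m → N ≤ n →
      newtonSeq a c m - newtonSeq a c n = 0 ∨ M ≤ V.ν (newtonSeq a c m - newtonSeq a c n) := by
    intro M
    refine ⟨M.toNat, fun p q hp hq => ?_⟩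
    have hMt : M ≤ (M.toNat : ℤ) := Int.self_le_toNat M
    rcases le_total q p with h | h
    · obtain ⟨k, rfl⟩ : ∃ k, p = q + k := ⟨p - q, by omega⟩
      rcases hdiff q k with h0 | ⟨_, hb⟩
      · left; exact h0
      · right
        have : (M.toNat : ℤ) ≤ (q : ℤ) := by exact_mod_cast hq
        omega
    · obtain ⟨k, rfl⟩ : ∃ k, q = p + k := ⟨q - p, by omega⟩
      rcases hdiff p k with h0 | ⟨hne2, hb⟩
      · left
        rw [sub_eq_zero] at h0 ⊢
        exact h0.symm
      · right
        have hrw : newtonSeq a c p - newtonSeq a c (p + k) =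
            -(newtonSeq a c (p + k) - newtonSeq a c p) := by ring
        rw [hrw, V.nu_neg _ hne2]
        have : (M.toNat : ℤ) ≤ (p : ℤ) := by exact_mod_cast hp
        omega
  obtain ⟨L, hL⟩ := hcomp (newtonSeq a c) hcauchy
  -- ν L = 0
  have hL0 : L ≠ 0 ∧ V.ν L = 0 := by
    obtain ⟨N1, hN1⟩ := hL 1
    by_cases hz : newtonSeq a c N1 - L = 0
    · rw [sub_eq_zero] at hz
      exact ⟨hz ▸ (inv N1).1, hz ▸ (inv N1).2.1⟩
    · have hb : 1 ≤ V.ν (newtonSeq a c N1 - L) := (hN1 N1 le_rfl).resolve_left hz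
      have hadd := V.nu_add_eq (newtonSeq a c N1) (-(newtonSeq a c N1 - L)) (inv N1).1
        (neg_ne_zero.mpr hz) (by rw [V.nu_neg _ hz, (inv N1).2.1]; omega)
      have heq : newtonSeq a c N1 + -(newtonSeq a c N1 - L) = L := by ring
      rw [heq, (inv N1).2.1] at hadd
      exact hadd
  -- L ^ 2 = a
  by_cases hLa : L ^ 2 = a
  · exact main L hLa
  have hLa0 : L ^ 2 - a ≠ 0 := sub_ne_zero.mpr hLa
  obtain ⟨N2, hN2⟩ := hL (V.ν (L ^ 2 - a) + 1)
  set w := V.ν (L ^ 2 - a) with hw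
  set n := max N2 (w.toNat + 1) with hn
  have hnN : N2 ≤ n := le_max_left _ _
  have hnw : w + 1 ≤ (n : ℤ) := by
    have h1 : w.toNat + 1 ≤ n := le_max_right _ _
    have h2 : w ≤ (w.toNat : ℤ) := Int.self_le_toNat w
    have : ((w.toNat + 1 : ℕ) : ℤ) ≤ (n : ℤ) := by exact_mod_cast h1
    push_cast at this
    omega
  have hinvn := (inv n).2.2
  by_cases hz : newtonSeq a c n - L = 0
  · rw [sub_eq_zero] at hz
    rw [hz] at hinvn
    omega
  · have hb : w + 1 ≤ V.ν (newtonSeq a c n - L) := (hN2 n hnN).resolve_left hz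
    by_cases hsq : L ^ 2 - newtonSeq a c n ^ 2 = 0
    · have heq2 : L ^ 2 - a = newtonSeq a c n ^ 2 - a := by linear_combination hsq
      rw [hw, heq2] at hnw
      omega
    · have hfa : newtonSeq a c n ^ 2 - a ≠ 0 := sub_ne_zero.mpr (hroot n)
      have hLfn : L - newtonSeq a c n ≠ 0 := by
        intro h; exact hz (by linear_combination -h)
      have hLpn : L + newtonSeq a c n ≠ 0 := by
        intro h
        exact hsq (by linear_combination (L - newtonSeq a c n) * h)
      have hν1 : V.ν (L - newtonSeq a c n) = V.ν (newtonSeq a c n - L) := by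
        rw [show L - newtonSeq a c n = -(newtonSeq a c n - L) by ring, V.nu_neg _ hz]
      have hνp : 0 ≤ V.ν (L + newtonSeq a c n) := by
        have hadd := V.ν_add L (newtonSeq a c n) hL0.1 (inv n).1 hLpn
        rw [hL0.2, (inv n).2.1] at hadd
        omega
      have hfac : L ^ 2 - newtonSeq a c n ^ 2 =
          (L - newtonSeq a c n) * (L + newtonSeq a c n) := by ring
      have hνfac : w + 1 ≤ V.ν (L ^ 2 - newtonSeq a c n ^ 2) := by
        rw [hfac, V.ν_mul _ _ hLfn hLpn, hν1]
        omega
      have hsum : (L ^ 2 - newtonSeq a c n ^ 2) + (newtonSeq a c n ^ 2 - a) = L ^ 2 - a := by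
        ring
      have hνs := V.ν_add _ _ hsq hfa (by rw [hsum]; exact hLa0)
      rw [hsum] at hνs
      omega
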